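/- In the compound Poisson matrix factorization model where N ~ Poisson(∑_{k=1}^K θ_kβ_k) with mutually independent θ_k (mean μ_θ, variance σ_θ²) and β_k (mean μ_β, variance σ_β²), and Y given N has mean κNψ' and variance κNψ'', the marginal moments are E[Y] = κψ'·K·μ_θμ_β and Var[Y] = κψ''·Kμ_θμ_β + (κψ')²·K·(μ_θμ_β + μ_β²σ_θ² + μ_θ²σ_β² + σ_θ²σ_β²). -/

import Mathlib

open MeasureTheory ProbabilityTheory

open MeasureTheory ProbabilityTheory Real
open scoped ENNReal NNReal Nat

lemma poisson_hasSum_mean (r : ℝ≥0) :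
    HasSum (fun n : ℕ => (n : ℝ) * poissonPMFReal r n) r := by
  have h : HasSum (fun n : ℕ => (r : ℝ) * poissonPMFReal r n) r := by
    have := (poissonPMFRealSum r).mul_left (r : ℝ); rw [mul_one] at this; exact this
  have heq : ∀ n : ℕ, ((n + 1 : ℕ) : ℝ) * poissonPMFReal r (n + 1)
      = (r : ℝ) * poissonPMFReal r n := by
    intro n
    simp only [poissonPMFReal, Nat.factorial_succ, Nat.cast_mul, Nat.cast_add, Nat.cast_one,
      pow_succ]
    have h2 : ((Nat.factorial n : ℕ) : ℝ) ≠ 0 := by exact_mod_cast (Nat.factorial_pos n).ne'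
    have h1 : ((n : ℝ) + 1) ≠ 0 := by positivity
    field_simp
  refine (hasSum_nat_add_iff' (f := fun n : ℕ => (n : ℝ) * poissonPMFReal r n) 1).mp ?_
  simp only [Finset.sum_range_one, Nat.cast_zero, zero_mul, sub_zero]
  simp only [heq]; exact h

lemma poisson_hasSum_sq (r : ℝ≥0) :
    HasSum (fun n : ℕ => (n : ℝ)^2 * poissonPMFReal r n) ((r : ℝ) + (r : ℝ)^2) := by
  have hfac : HasSum (fun n : ℕ => (n : ℝ) * ((n : ℝ) - 1) * poissonPMFReal r n) ((r : ℝ)^2) := by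
    have h : HasSum (fun n : ℕ => (r : ℝ)^2 * poissonPMFReal r n) ((r : ℝ)^2) := by
      have := (poissonPMFRealSum r).mul_left ((r : ℝ)^2); rw [mul_one] at this; exact this
    have heq : ∀ n : ℕ, ((n + 2 : ℕ) : ℝ) * (((n + 2 : ℕ) : ℝ) - 1) * poissonPMFReal r (n + 2)
        = (r : ℝ)^2 * poissonPMFReal r n := by
      intro n
      simp only [poissonPMFReal, Nat.factorial_succ, Nat.cast_mul, Nat.cast_add,
        Nat.cast_ofNat, Nat.cast_one, pow_succ]
      have h2 : ((Nat.factorial n : ℕ) : ℝ) ≠ 0 := by exact_mod_cast (Nat.factorial_pos n).ne'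
      have h3 : ((n : ℝ) + 1) ≠ 0 := by positivity
      have h4 : ((n : ℝ) + 2) ≠ 0 := by positivity
      push_cast
      field_simp
      ring
    refine (hasSum_nat_add_iff'
      (f := fun n : ℕ => (n : ℝ) * ((n : ℝ) - 1) * poissonPMFReal r n) 2).mp ?_
    have h0 : ∑ i ∈ Finset.range 2, (i : ℝ) * ((i : ℝ) - 1) * poissonPMFReal r i = 0 := by
      simp [Finset.sum_range_succ]
    rw [h0, sub_zero]
    simp only [heq]; exact h
  have h := hfac.add (poisson_hasSum_mean r)
  have : (fun n : ℕ => (n : ℝ) * ((n : ℝ) - 1) * poissonPMFReal r n + (n : ℝ) * poissonPMFReal r n)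
      = fun n : ℕ => (n : ℝ)^2 * poissonPMFReal r n := by
    funext n; ring
  rw [this] at h
  simpa [add_comm] using h

lemma lintegral_poissonMeasure (r : ℝ≥0) (g : ℕ → ℝ≥0∞) :
    ∫⁻ n, g n ∂(poissonMeasure r) = ∑' n, g n * ENNReal.ofReal (poissonPMFReal r n) := by
  rw [poissonMeasure, lintegral_countable']
  congr 1
  funext n
  rw [Measure.sum_smul_dirac_singleton]
  rfl

lemma lintegral_tsum_ofReal (r : ℝ≥0) (f : ℕ → ℝ) (hf : ∀ n, 0 ≤ f n) (a : ℝ)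
    (hsum : HasSum f a) :
    ∑' n : ℕ, ENNReal.ofReal (f n) = ENNReal.ofReal a := by
  rw [← ENNReal.ofReal_tsum_of_nonneg hf hsum.summable, hsum.tsum_eq]

lemma poisson_lint_mean (r : ℝ≥0) :
    ∫⁻ n, (n : ℝ≥0∞) ∂(poissonMeasure r) = ENNReal.ofReal (r : ℝ) := by
  rw [lintegral_poissonMeasure]
  have : ∀ n : ℕ, (n : ℝ≥0∞) * ENNReal.ofReal (poissonPMFReal r n)
      = ENNReal.ofReal ((n : ℝ) * poissonPMFReal r n) := by
    intro n
    rw [ENNReal.ofReal_mul (by positivity), ENNReal.ofReal_natCast]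
  simp_rw [this]
  exact lintegral_tsum_ofReal r _ (fun n => mul_nonneg (Nat.cast_nonneg n) poissonPMFReal_nonneg) _ (poisson_hasSum_mean r)

lemma poisson_lint_sq (r : ℝ≥0) :
    ∫⁻ n, (n : ℝ≥0∞)^2 ∂(poissonMeasure r) = ENNReal.ofReal ((r : ℝ) + (r : ℝ)^2) := by
  rw [lintegral_poissonMeasure]
  have : ∀ n : ℕ, (n : ℝ≥0∞)^2 * ENNReal.ofReal (poissonPMFReal r n)
      = ENNReal.ofReal ((n : ℝ)^2 * poissonPMFReal r n) := by
    intro n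
    rw [ENNReal.ofReal_mul (by positivity), ENNReal.ofReal_pow (by positivity),
      ENNReal.ofReal_natCast]
  simp_rw [this]
  exact lintegral_tsum_ofReal r _ (fun n => mul_nonneg (by positivity) poissonPMFReal_nonneg) _ (poisson_hasSum_sq r)

lemma lintegral_eq_lintegral_condDistrib {Ω : Type*} [MeasureSpace Ω]
    [IsProbabilityMeasure (ℙ : Measure Ω)] (X : Ω → ℝ) (N : Ω → ℕ)
    (hX : Measurable X) (hN : Measurable N) (g : ℕ → ℝ≥0∞) :
    ∫⁻ ω, g (N ω) ∂ℙ = ∫⁻ ω, ∫⁻ n, g n ∂(condDistrib N X ℙ (X ω)) ∂ℙ := by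
  have hg : Measurable g := measurable_from_top
  have h1 : (Measure.map (fun ω => (X ω, N ω)) ℙ) = (Measure.map X ℙ) ⊗ₘ condDistrib N X ℙ := by
    rw [compProd_map_condDistrib hN.aemeasurable]
  calc ∫⁻ ω, g (N ω) ∂ℙ
      = ∫⁻ p : ℝ × ℕ, g p.2 ∂(Measure.map (fun ω => (X ω, N ω)) ℙ) := by
        rw [lintegral_map (f := fun p : ℝ × ℕ => g p.2) (hg.comp measurable_snd) (hX.prodMk hN)]
    _ = ∫⁻ x, ∫⁻ n, g n ∂(condDistrib N X ℙ x) ∂(Measure.map X ℙ) := by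
        rw [h1, Measure.lintegral_compProd (f := fun p : ℝ × ℕ => g p.2) (hg.comp measurable_snd)]
    _ = ∫⁻ ω, ∫⁻ n, g n ∂(condDistrib N X ℙ (X ω)) ∂ℙ := by
        rw [lintegral_map ?_ hX]
        exact Measurable.lintegral_kernel_prod_right (f := fun _ n => g n)
          (hg.comp measurable_snd)


/-- Compound Poisson matrix factorization prior predictive moments: with
`N ~ Poisson(∑_k θ_k β_k)` for mutually independent latent factors and `Y` having
conditional mean `κ N ψ'` and conditional variance `κ N ψ''` given `N`, we get
`E[Y] = κψ' K μθ μβ` and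
`Var[Y] = κψ'' K μθ μβ + (κψ')² K (μθμβ + μβ²σθ² + μθ²σβ² + σθ²σβ²)`. -/
theorem cpmf_prior_predictive_moments {Ω : Type*} [MeasureSpace Ω]
    [IsProbabilityMeasure (ℙ : Measure Ω)] (K : ℕ) (θ β : Fin K → Ω → ℝ)
    (N : Ω → ℕ) (Y : Ω → ℝ) (μθ μβ σθ σβ κ ψ' ψ'' : ℝ)
    (hκ : 0 < κ) (hψ' : 0 < ψ') (hψ'' : 0 < ψ'')
    (hθmeas : ∀ k, Measurable (θ k)) (hβmeas : ∀ k, Measurable (β k))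
    (hNmeas : Measurable N)
    (hθnonneg : ∀ k ω, 0 ≤ θ k ω) (hβnonneg : ∀ k ω, 0 ≤ β k ω)
    (hθ : ∀ k, MemLp (θ k) 2 ℙ) (hβ : ∀ k, MemLp (β k) 2 ℙ)
    (hY : MemLp Y 2 ℙ)
    (hindep : iIndepFun (m := fun _ => Real.measurableSpace) (Sum.elim θ β) ℙ)
    (hμθ : ∀ k, (∫ ω, θ k ω) = μθ) (hσθ : ∀ k, variance (θ k) ℙ = σθ^2)
    (hμβ : ∀ k, (∫ ω, β k ω) = μβ) (hσβ : ∀ k, variance (β k) ℙ = σβ^2)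
    (hNcond : ∀ᵐ ω ∂ℙ,
      condDistrib N (fun ω' => ∑ k, θ k ω' * β k ω') ℙ (∑ k, θ k ω * β k ω) =
        poissonMeasure (∑ k, θ k ω * β k ω).toNNReal)
    (hYmean : (ℙ[Y | MeasurableSpace.comap N inferInstance]) =ᵐ[ℙ]
      fun ω => κ * (N ω : ℝ) * ψ')
    (hYvar : (ℙ[fun ω => (Y ω)^2 | MeasurableSpace.comap N inferInstance]) =ᵐ[ℙ]
      fun ω => κ * (N ω : ℝ) * ψ'' + (κ * (N ω : ℝ) * ψ')^2) :
    (∫ ω, Y ω) = κ * ψ' * K * (μθ * μβ) ∧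
      variance Y ℙ = κ * ψ'' * K * (μθ * μβ) +
        (κ * ψ')^2 * K * (μθ * μβ + μβ^2 * σθ^2 + μθ^2 * σβ^2 + σθ^2 * σβ^2) := by
  set X : Ω → ℝ := fun ω => ∑ k, θ k ω * β k ω with hXdef
  set v : ℝ := μβ^2 * σθ^2 + μθ^2 * σβ^2 + σθ^2 * σβ^2 with hvdef
  have hm : MeasurableSpace.comap N inferInstance ≤ (inferInstance : MeasurableSpace Ω) :=
    hNmeas.comap_le
  have hXmeas : Measurable X :=
    Finset.measurable_sum _ fun k _ => (hθmeas k).mul (hβmeas k)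
  have hXnonneg : ∀ ω, 0 ≤ X ω := fun ω =>
    Finset.sum_nonneg fun k _ => mul_nonneg (hθnonneg k ω) (hβnonneg k ω)
  -- independence of θ k and β k
  have hIθβ : ∀ k, IndepFun (θ k) (β k) ℙ := fun k =>
    hindep.indepFun (show (Sum.inl k : Fin K ⊕ Fin K) ≠ Sum.inr k by simp)
  have hsqmeas : Measurable (fun x : ℝ => x ^ 2) := measurable_id.pow_const 2
  have hIsq : ∀ k, IndepFun (fun ω => θ k ω ^ 2) (fun ω => β k ω ^ 2) ℙ := fun k =>
    (hIθβ k).comp hsqmeas hsqmeas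
  have hθsqint : ∀ k, Integrable (fun ω => θ k ω ^ 2) ℙ := fun k => (hθ k).integrable_sq
  have hβsqint : ∀ k, Integrable (fun ω => β k ω ^ 2) ℙ := fun k => (hβ k).integrable_sq
  have hsqint : ∀ k, Integrable (fun ω => (θ k ω * β k ω) ^ 2) ℙ := by
    intro k
    have := (hIsq k).integrable_mul (hθsqint k) (hβsqint k)
    refine this.congr (Filter.Eventually.of_forall fun ω => ?_)
    simp [mul_pow]
  have hmem : ∀ k, MemLp (fun ω => θ k ω * β k ω) 2 ℙ := fun k =>
    (memLp_two_iff_integrable_sq (((hθmeas k).mul (hβmeas k)).aestronglyMeasurable)).2 (hsqint k)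
  have hEθβ : ∀ k, ∫ ω, θ k ω * β k ω ∂ℙ = μθ * μβ := by
    intro k
    have h := (hIθβ k).integral_mul_eq_mul_integral ((hθ k).integrable one_le_two).aestronglyMeasurable
      ((hβ k).integrable one_le_two).aestronglyMeasurable
    rw [hμθ, hμβ] at h
    exact h
  have hEθ2 : ∀ k, ∫ ω, θ k ω ^ 2 ∂ℙ = σθ^2 + μθ^2 := by
    intro k
    have h := variance_eq_sub (hθ k)
    simp only [Pi.pow_apply] at h
    rw [hσθ k, hμθ k] at h
    linarith
  have hEβ2 : ∀ k, ∫ ω, β k ω ^ 2 ∂ℙ = σβ^2 + μβ^2 := by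
    intro k
    have h := variance_eq_sub (hβ k)
    simp only [Pi.pow_apply] at h
    rw [hσβ k, hμβ k] at h
    linarith
  have hEsq : ∀ k, ∫ ω, (θ k ω * β k ω) ^ 2 ∂ℙ = (σθ^2 + μθ^2) * (σβ^2 + μβ^2) := by
    intro k
    have h1 : ∫ ω, (θ k ω * β k ω) ^ 2 ∂ℙ = ∫ ω, (θ k ω ^ 2) * (β k ω ^ 2) ∂ℙ := by
      congr 1; funext ω; ring
    rw [h1]
    have h := (hIsq k).integral_mul_eq_mul_integral (hθsqint k).aestronglyMeasurable (hβsqint k).aestronglyMeasurable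
    rw [hEθ2 k, hEβ2 k] at h
    exact h
  have hVarProd : ∀ k, variance (fun ω => θ k ω * β k ω) ℙ = v := by
    intro k
    have h := variance_eq_sub (hmem k)
    have h2 : (ℙ : Measure Ω)[(fun ω => θ k ω * β k ω) ^ 2] = (σθ^2 + μθ^2) * (σβ^2 + μβ^2) := by
      rw [← hEsq k]; congr 1
    rw [h, h2]
    have h3 : (ℙ : Measure Ω)[fun ω => θ k ω * β k ω] = μθ * μβ := hEθβ k
    rw [h3, hvdef]; ring
  -- expectation and variance of X
  have hXfun : X = ∑ k, fun ω => θ k ω * β k ω := by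
    funext ω; simp [hXdef, Finset.sum_apply]
  have hXmem : MemLp X 2 ℙ := by
    rw [hXfun]; exact memLp_finset_sum' _ fun k _ => hmem k
  have hXint : Integrable X ℙ := hXmem.integrable one_le_two
  have hEX : ∫ ω, X ω ∂ℙ = K * (μθ * μβ) := by
    have : ∫ ω, X ω ∂ℙ = ∑ k, ∫ ω, θ k ω * β k ω ∂ℙ :=
      integral_finset_sum _ fun k _ => (hmem k).integrable one_le_two
    rw [this]
    simp [hEθβ]
  have hVarX : variance X ℙ = K * v := by
    rw [hXfun, IndepFun.variance_sum (fun k _ => hmem k) ?_]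
    · simp [hVarProd]
    · intro i _ j _ hij
      have := hindep.indepFun_mul_mul (fun s => by
          cases s with
          | inl k => exact hθmeas k
          | inr k => exact hβmeas k)
        (Sum.inl i) (Sum.inr i) (Sum.inl j) (Sum.inr j)
        (by simp [hij]) (by simp) (by simp) (by simp [hij])
      exact this
  have hEX2 : ∫ ω, X ω ^ 2 ∂ℙ = K * v + (K * (μθ * μβ))^2 := by
    have h := variance_eq_sub hXmem
    have h1 : (ℙ : Measure Ω)[X ^ 2] = ∫ ω, X ω ^ 2 ∂ℙ := rfl
    have h2 : (ℙ : Measure Ω)[X] = K * (μθ * μβ) := hEX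
    rw [hVarX, h1, h2] at h
    linarith
  -- lintegral identities for N
  have hcond' : ∀ᵐ ω ∂ℙ, condDistrib N X ℙ (X ω) = poissonMeasure (X ω).toNNReal := hNcond
  have LN1 : ∫⁻ ω, (N ω : ℝ≥0∞) ∂ℙ = ENNReal.ofReal (∫ ω, X ω ∂ℙ) := by
    rw [lintegral_eq_lintegral_condDistrib X N hXmeas hNmeas (fun n => (n : ℝ≥0∞))]
    have : ∫⁻ ω, ∫⁻ n, (n : ℝ≥0∞) ∂(condDistrib N X ℙ (X ω)) ∂ℙ
        = ∫⁻ ω, ENNReal.ofReal (X ω) ∂ℙ := by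
      refine lintegral_congr_ae (hcond'.mono fun ω h => ?_)
      simp only [h, poisson_lint_mean, Real.coe_toNNReal _ (hXnonneg ω)]
    rw [this, ← ofReal_integral_eq_lintegral_ofReal hXint
      (Filter.Eventually.of_forall hXnonneg)]
  have LN2 : ∫⁻ ω, (N ω : ℝ≥0∞)^2 ∂ℙ
      = ENNReal.ofReal ((∫ ω, X ω ∂ℙ) + ∫ ω, X ω ^ 2 ∂ℙ) := by
    rw [lintegral_eq_lintegral_condDistrib X N hXmeas hNmeas (fun n => (n : ℝ≥0∞)^2)]
    have h1 : ∫⁻ ω, ∫⁻ n, (n : ℝ≥0∞)^2 ∂(condDistrib N X ℙ (X ω)) ∂ℙ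
        = ∫⁻ ω, ENNReal.ofReal (X ω + X ω ^ 2) ∂ℙ := by
      refine lintegral_congr_ae (hcond'.mono fun ω h => ?_)
      simp only [h, poisson_lint_sq, Real.coe_toNNReal _ (hXnonneg ω)]
    have hadd : Integrable (fun ω => X ω + X ω ^ 2) ℙ := hXint.add hXmem.integrable_sq
    rw [h1, ← ofReal_integral_eq_lintegral_ofReal hadd
      (Filter.Eventually.of_forall fun ω => add_nonneg (hXnonneg ω) (sq_nonneg _))]
    congr 1
    exact integral_add hXint hXmem.integrable_sq
  -- integrability of N and N²
  have hNrmeas : Measurable (fun ω => (N ω : ℝ)) := measurable_from_top.comp hNmeas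
  have hNint : Integrable (fun ω => (N ω : ℝ)) ℙ := by
    refine ⟨hNrmeas.aestronglyMeasurable, ?_⟩
    simp only [HasFiniteIntegral]
    have : ∀ ω, ‖(N ω : ℝ)‖ₑ = (N ω : ℝ≥0∞) := by
      intro ω; simp [Real.nnnorm_natCast]
    simp_rw [this, LN1]
    exact ENNReal.ofReal_lt_top
  have hN2int : Integrable (fun ω => (N ω : ℝ)^2) ℙ := by
    refine ⟨(hNrmeas.pow_const 2).aestronglyMeasurable, ?_⟩
    simp only [HasFiniteIntegral]
    have : ∀ ω, ‖(N ω : ℝ)^2‖ₑ = (N ω : ℝ≥0∞)^2 := by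
      intro ω
      rw [enorm_pow]
      simp [Real.nnnorm_natCast]
    simp_rw [this, LN2]
    exact ENNReal.ofReal_lt_top
  -- moments of N
  have hEXnonneg : 0 ≤ ∫ ω, X ω ∂ℙ := integral_nonneg hXnonneg
  have hEX2nonneg : 0 ≤ ∫ ω, X ω ^ 2 ∂ℙ := integral_nonneg fun ω => sq_nonneg _
  have EN : ∫ ω, (N ω : ℝ) ∂ℙ = K * (μθ * μβ) := by
    rw [integral_eq_lintegral_of_nonneg_ae
      (Filter.Eventually.of_forall fun ω => by positivity) hNrmeas.aestronglyMeasurable]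
    simp_rw [ENNReal.ofReal_natCast]
    rw [LN1, ENNReal.toReal_ofReal hEXnonneg, hEX]
  have EN2 : ∫ ω, (N ω : ℝ)^2 ∂ℙ = K * (μθ * μβ) + (K * v + (K * (μθ * μβ))^2) := by
    rw [integral_eq_lintegral_of_nonneg_ae
      (Filter.Eventually.of_forall fun ω => by positivity)
      (hNrmeas.pow_const 2).aestronglyMeasurable]
    have : ∀ ω, ENNReal.ofReal ((N ω : ℝ)^2) = (N ω : ℝ≥0∞)^2 := by
      intro ω
      rw [ENNReal.ofReal_pow (by positivity), ENNReal.ofReal_natCast]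
    simp_rw [this]
    rw [LN2, ENNReal.toReal_ofReal (by positivity), hEX, hEX2]
  -- moments of Y
  have EY : ∫ ω, Y ω ∂ℙ = κ * ψ' * (K * (μθ * μβ)) := by
    have h1 : ∫ ω, Y ω ∂ℙ = ∫ ω, (ℙ[Y | MeasurableSpace.comap N inferInstance]) ω ∂ℙ :=
      (integral_condExp hm).symm
    rw [h1, integral_congr_ae hYmean]
    have : ∫ ω, κ * (N ω : ℝ) * ψ' ∂ℙ = (κ * ψ') * ∫ ω, (N ω : ℝ) ∂ℙ := by
      rw [← integral_const_mul]
      congr 1; funext ω; ring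
    rw [this, EN]
  have EY2 : ∫ ω, (Y ω)^2 ∂ℙ
      = κ * ψ'' * (K * (μθ * μβ))
        + (κ * ψ')^2 * (K * (μθ * μβ) + (K * v + (K * (μθ * μβ))^2)) := by
    have h1 : ∫ ω, (Y ω)^2 ∂ℙ
        = ∫ ω, (ℙ[fun ω => (Y ω)^2 | MeasurableSpace.comap N inferInstance]) ω ∂ℙ :=
      (integral_condExp hm).symm
    rw [h1, integral_congr_ae hYvar]
    have h2 : ∫ ω, (κ * (N ω : ℝ) * ψ'' + (κ * (N ω : ℝ) * ψ')^2) ∂ℙ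
        = (κ * ψ'') * (∫ ω, (N ω : ℝ) ∂ℙ) + (κ * ψ')^2 * ∫ ω, (N ω : ℝ)^2 ∂ℙ := by
      rw [integral_add (hNint.const_mul _ |>.mul_const _) ?_]
      · rw [← integral_const_mul, ← integral_const_mul]
        congr 1
        · congr 1; funext ω; ring
        · congr 1; funext ω; ring
      · refine (hN2int.const_mul ((κ * ψ')^2)).congr
          (Filter.Eventually.of_forall fun ω => ?_)
        ring
    rw [h2, EN, EN2]
  refine ⟨by rw [EY]; ring, ?_⟩
  have hvar := variance_eq_sub hY
  have h1 : (ℙ : Measure Ω)[Y ^ 2] = ∫ ω, (Y ω)^2 ∂ℙ := rfl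
  have h2 : (ℙ : Measure Ω)[Y] = κ * ψ' * (K * (μθ * μβ)) := EY
  rw [hvar, h1, h2, EY2, hvdef]
  ring
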